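/- Consider the primal LP: maximize ∑_{i=1}^m r_i ρ_i α_i subject to ∑_{i=1}^m b_i ρ_i α_i ≤ b, 0 ≤ α_i ≤ 1 (all data positive), and its dual: minimize u·b + ∑_i v_i subject to v_i + b_i ρ_i u ≥ r_i ρ_i, v ≥ 0, u ≥ 0. If α* is primal optimal and (u*, v*) is dual optimal, then for all t ≥ 0, u*·b + ∑_{i=1}^m v_i*(1 − exp(−μ_i t)) ≤ ∑_{i=1}^m r_i ρ_i α_i* (1 − exp(−μ_i t)) + u*·b·exp(−μ_min·t), where μ_min = min_i μ_i. -/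

import Mathlib

open Finset

theorem complementary_slackness_chain
    {m : ℕ} (r ρ b' μ : Fin m → ℝ) (b : ℝ)
    (αstar : Fin m → ℝ) (ustar : ℝ) (vstar : Fin m → ℝ)
    (hr : ∀ i, 0 < r i) (hρ : ∀ i, 0 < ρ i) (hb' : ∀ i, 0 < b' i)
    (hμ : ∀ i, 0 < μ i) (hb : 0 < b)
    -- α* is primal feasible
    (hpf1 : ∑ i, b' i * ρ i * αstar i ≤ b)
    (hpf2 : ∀ i, 0 ≤ αstar i) (hpf3 : ∀ i, αstar i ≤ 1)
    -- α* is primal optimal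
    (hpopt : ∀ α : Fin m → ℝ, (∑ i, b' i * ρ i * α i ≤ b) →
        (∀ i, 0 ≤ α i) → (∀ i, α i ≤ 1) →
        ∑ i, r i * ρ i * α i ≤ ∑ i, r i * ρ i * αstar i)
    -- (u*, v*) is dual feasible
    (hdf1 : ∀ i, r i * ρ i ≤ vstar i + b' i * ρ i * ustar)
    (hdf2 : ∀ i, 0 ≤ vstar i) (hdf3 : 0 ≤ ustar)
    -- (u*, v*) is dual optimal
    (hdopt : ∀ (u : ℝ) (v : Fin m → ℝ),
        (∀ i, r i * ρ i ≤ v i + b' i * ρ i * u) → (∀ i, 0 ≤ v i) → 0 ≤ u →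
        ustar * b + ∑ i, vstar i ≤ u * b + ∑ i, v i) :
    ∀ t : ℝ, 0 ≤ t →
      ustar * b + ∑ i, vstar i * (1 - Real.exp (-(μ i) * t)) ≤
        (∑ i, r i * ρ i * αstar i * (1 - Real.exp (-(μ i) * t))) +
          ustar * b * Real.exp (-(⨅ i, μ i) * t) := by
  classical
  have hFpos : ∀ i, 0 < b' i * ρ i := fun i => mul_pos (hb' i) (hρ i)
  have hGpos : ∀ i, 0 < r i * ρ i := fun i => mul_pos (hr i) (hρ i)
  -- generic feasibility of the truncated dual candidate
  have hvfeas : ∀ (u : ℝ) (i : Fin m),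
      r i * ρ i ≤ max (r i * ρ i - b' i * ρ i * u) 0 + b' i * ρ i * u := by
    intro u i
    have := le_max_left (r i * ρ i - b' i * ρ i * u) (0:ℝ)
    linarith
  have hvnn : ∀ (u : ℝ) (i : Fin m), (0:ℝ) ≤ max (r i * ρ i - b' i * ρ i * u) 0 :=
    fun u i => le_max_right _ _
  -- Step 1: v* i = max (g i - f i u*) 0, by dual optimality in v
  have hvchar : ∀ i, vstar i = max (r i * ρ i - b' i * ρ i * ustar) 0 := by
    have hvle : ∀ i ∈ Finset.univ, max (r i * ρ i - b' i * ρ i * ustar) 0 ≤ vstar i := by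
      intro i _
      exact max_le (by linarith [hdf1 i]) (hdf2 i)
    have hsum_le : ∑ i, vstar i ≤ ∑ i, max (r i * ρ i - b' i * ρ i * ustar) 0 := by
      have := hdopt ustar (fun i => max (r i * ρ i - b' i * ρ i * ustar) 0)
        (hvfeas ustar) (fun i => hvnn ustar i) hdf3
      linarith
    have h1 : ∑ i, max (r i * ρ i - b' i * ρ i * ustar) 0 ≤ ∑ i, vstar i :=
      Finset.sum_le_sum hvle
    have heq := le_antisymm h1 hsum_le
    intro i
    exact ((Finset.sum_eq_sum_iff_of_le hvle).mp heq i (Finset.mem_univ i)).symm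
  set S : Finset (Fin m) := Finset.univ.filter (fun i => b' i * ρ i * ustar < r i * ρ i) with hSdef
  -- Step 2 (D1): perturbing u* upwards: ∑_{i ∈ S} b_i ρ_i ≤ b
  have hD1 : ∑ i ∈ S, b' i * ρ i ≤ b := by
    rcases S.eq_empty_or_nonempty with hS | hS
    · rw [hS]; simpa using hb.le
    · set ε := S.inf' hS (fun i => (r i * ρ i - b' i * ρ i * ustar) / (b' i * ρ i)) with hεdef
      have hεpos : 0 < ε := by
        rw [hεdef, Finset.lt_inf'_iff]
        intro i hi
        have hPi : b' i * ρ i * ustar < r i * ρ i := (Finset.mem_filter.mp hi).2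
        exact div_pos (by linarith) (hFpos i)
      have hεle : ∀ i ∈ S, ε ≤ (r i * ρ i - b' i * ρ i * ustar) / (b' i * ρ i) :=
        fun i hi => Finset.inf'_le _ hi
      have hcomp : ∀ i, max (r i * ρ i - b' i * ρ i * (ustar + ε)) 0
          = vstar i - (if i ∈ S then b' i * ρ i * ε else 0) := by
        intro i
        by_cases hPi : b' i * ρ i * ustar < r i * ρ i
        · have hi : i ∈ S := Finset.mem_filter.mpr ⟨Finset.mem_univ i, hPi⟩
          have h1 : ε * (b' i * ρ i) ≤ r i * ρ i - b' i * ρ i * ustar := by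
            have := hεle i hi
            exact (le_div_iff₀ (hFpos i)).mp this
          have h2 : 0 ≤ r i * ρ i - b' i * ρ i * (ustar + ε) := by
            have : b' i * ρ i * (ustar + ε) = b' i * ρ i * ustar + ε * (b' i * ρ i) := by ring
            linarith [this]
          rw [max_eq_left h2, if_pos hi, hvchar i, max_eq_left (by linarith)]
          ring
        · have hi : i ∉ S := by
            rw [hSdef]; simp [hPi]
          have hle : r i * ρ i - b' i * ρ i * ustar ≤ 0 := by push_neg at hPi; linarith
          have h2 : r i * ρ i - b' i * ρ i * (ustar + ε) ≤ 0 := by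
            have : b' i * ρ i * (ustar + ε) = b' i * ρ i * ustar + ε * (b' i * ρ i) := by ring
            nlinarith [(hFpos i), hεpos]
          rw [max_eq_right h2, if_neg hi, hvchar i, max_eq_right hle]
          ring
      have hkey := hdopt (ustar + ε) (fun i => max (r i * ρ i - b' i * ρ i * (ustar + ε)) 0)
        (hvfeas _) (fun i => hvnn _ i) (by linarith)
      have hsumv : ∑ i, max (r i * ρ i - b' i * ρ i * (ustar + ε)) 0
          = ∑ i, vstar i - ε * ∑ i ∈ S, b' i * ρ i := by
        rw [Finset.sum_congr rfl (fun i _ => hcomp i), Finset.sum_sub_distrib]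
        congr 1
        rw [Finset.sum_ite_mem, Finset.univ_inter, Finset.mul_sum]
        exact Finset.sum_congr rfl (fun i _ => by ring)
      rw [hsumv] at hkey
      have : ε * ∑ i ∈ S, b' i * ρ i ≤ ε * b := by nlinarith
      exact le_of_mul_le_mul_left this hεpos
  -- Step 3 (D2): perturbing u* downwards: if u* > 0 then b ≤ ∑_{i : tight or slack} b_i ρ_i
  have hD2 : 0 < ustar →
      b ≤ ∑ i ∈ Finset.univ.filter (fun i => b' i * ρ i * ustar ≤ r i * ρ i), b' i * ρ i := by
    intro hupos
    set Sb : Finset (Fin m) := Finset.univ.filter (fun i => b' i * ρ i * ustar ≤ r i * ρ i)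
      with hSbdef
    set R : Finset (Fin m) := Finset.univ.filter (fun i => r i * ρ i < b' i * ρ i * ustar)
      with hRdef
    set ε := if hR : R.Nonempty then
        min ustar (R.inf' hR (fun i => (b' i * ρ i * ustar - r i * ρ i) / (b' i * ρ i)))
      else ustar with hεdef
    have hεpos : 0 < ε := by
      rw [hεdef]
      split
      · next hR =>
          apply lt_min hupos
          rw [Finset.lt_inf'_iff]
          intro i hi
          have hPi : r i * ρ i < b' i * ρ i * ustar := (Finset.mem_filter.mp hi).2
          exact div_pos (by linarith) (hFpos i)
      · exact hupos
    have hεu : ε ≤ ustar := by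
      rw [hεdef]; split
      · exact min_le_left _ _
      · exact le_refl ustar
    have hεR : ∀ i ∈ R, ε * (b' i * ρ i) ≤ b' i * ρ i * ustar - r i * ρ i := by
      intro i hi
      have h1 : ε ≤ (b' i * ρ i * ustar - r i * ρ i) / (b' i * ρ i) := by
        rw [hεdef]
        rw [dif_pos ⟨i, hi⟩]
        exact le_trans (min_le_right _ _) (Finset.inf'_le _ hi)
      exact (le_div_iff₀ (hFpos i)).mp h1
    have hcomp : ∀ i, max (r i * ρ i - b' i * ρ i * (ustar - ε)) 0
        = vstar i + (if i ∈ Sb then b' i * ρ i * ε else 0) := by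
      intro i
      by_cases hPi : b' i * ρ i * ustar ≤ r i * ρ i
      · have hi : i ∈ Sb := Finset.mem_filter.mpr ⟨Finset.mem_univ i, hPi⟩
        have h2 : 0 ≤ r i * ρ i - b' i * ρ i * (ustar - ε) := by
          nlinarith [hFpos i, hεpos]
        rw [max_eq_left h2, if_pos hi, hvchar i, max_eq_left (by linarith)]
        ring
      · have hi : i ∉ Sb := by rw [hSbdef]; simp [hPi]
        push_neg at hPi
        have hiR : i ∈ R := Finset.mem_filter.mpr ⟨Finset.mem_univ i, hPi⟩
        have h3 := hεR i hiR
        have h2 : r i * ρ i - b' i * ρ i * (ustar - ε) ≤ 0 := by nlinarith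
        rw [max_eq_right h2, if_neg hi, hvchar i, max_eq_right (by linarith)]
        ring
    have hkey := hdopt (ustar - ε) (fun i => max (r i * ρ i - b' i * ρ i * (ustar - ε)) 0)
      (hvfeas _) (fun i => hvnn _ i) (by linarith)
    have hsumv : ∑ i, max (r i * ρ i - b' i * ρ i * (ustar - ε)) 0
        = ∑ i, vstar i + ε * ∑ i ∈ Sb, b' i * ρ i := by
      rw [Finset.sum_congr rfl (fun i _ => hcomp i), Finset.sum_add_distrib]
      congr 1
      rw [Finset.sum_ite_mem, Finset.univ_inter, Finset.mul_sum]
      exact Finset.sum_congr rfl (fun i _ => by ring)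
    rw [hsumv] at hkey
    have : ε * b ≤ ε * ∑ i ∈ Sb, b' i * ρ i := by nlinarith
    exact le_of_mul_le_mul_left this hεpos
  -- Step 4: strong duality, by exhibiting a primal point attaining the dual value
  have hstrong : ustar * b + ∑ i, vstar i ≤ ∑ i, r i * ρ i * αstar i := by
    set T : Finset (Fin m) := Finset.univ.filter (fun i => b' i * ρ i * ustar = r i * ρ i)
      with hTdef
    have hvS : ∑ i, vstar i = ∑ i ∈ S, vstar i := by
      rw [hSdef]
      exact (Finset.sum_filter_of_ne (fun i _ hne => by
        by_contra hP
        push_neg at hP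
        exact hne (by rw [hvchar i, max_eq_right (by linarith)]))).symm
    rcases eq_or_lt_of_le hdf3 with hu0 | hupos
    · -- ustar = 0 : take α = 1
      have hSuniv : S = Finset.univ := by
        rw [hSdef]
        apply Finset.filter_true_of_mem
        intro i _
        rw [← hu0]
        simpa using hGpos i
      have hfeas : ∑ i, b' i * ρ i * (1:ℝ) ≤ b := by
        have := hD1
        rw [hSuniv] at this
        simpa using this
      have := hpopt (fun _ => 1) hfeas (fun i => zero_le_one) (fun i => le_refl 1)
      have hveq : ∑ i, vstar i = ∑ i, r i * ρ i := by
        apply Finset.sum_congr rfl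
        intro i _
        rw [hvchar i, ← hu0]
        simp [le_of_lt (hGpos i)]
      rw [← hu0, hveq]
      simpa using this
    · -- ustar > 0
      have hST : ∑ i ∈ Finset.univ.filter (fun i => b' i * ρ i * ustar ≤ r i * ρ i), b' i * ρ i
          = ∑ i ∈ S, b' i * ρ i + ∑ i ∈ T, b' i * ρ i := by
        rw [← Finset.sum_filter_add_sum_filter_not
          (Finset.univ.filter (fun i => b' i * ρ i * ustar ≤ r i * ρ i))
          (fun i => b' i * ρ i * ustar < r i * ρ i)]
        congr 1
        · apply Finset.sum_congr _ (fun _ _ => rfl)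
          rw [Finset.filter_filter, hSdef]
          apply Finset.filter_congr
          intro i _
          constructor
          · rintro ⟨_, h⟩; exact h
          · intro h; exact ⟨le_of_lt h, h⟩
        · apply Finset.sum_congr _ (fun _ _ => rfl)
          rw [Finset.filter_filter, hTdef]
          apply Finset.filter_congr
          intro i _
          constructor
          · rintro ⟨h1, h2⟩; push_neg at h2; exact le_antisymm h1 h2
          · intro h; exact ⟨le_of_eq h, by rw [h]; exact lt_irrefl _⟩
      have hD2' := hD2 hupos
      rw [hST] at hD2'
      set BS := ∑ i ∈ S, b' i * ρ i with hBSdef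
      set BT := ∑ i ∈ T, b' i * ρ i with hBTdef
      have hBT0 : 0 ≤ BT := Finset.sum_nonneg (fun i _ => (hFpos i).le)
      set θ : ℝ := if 0 < BT then (b - BS) / BT else 0 with hθdef
      have hθ0 : 0 ≤ θ := by
        rw [hθdef]; split
        · next h => exact div_nonneg (by linarith) h.le
        · exact le_refl 0
      have hθ1 : θ ≤ 1 := by
        rw [hθdef]; split
        · next h => rw [div_le_one h]; linarith
        · exact zero_le_one
      have hθkey : BS + θ * BT = b := by
        rw [hθdef]; split
        · next h => field_simp; ring
        · next h =>
            have hBT : BT = 0 := le_antisymm (by push_neg at h; exact h) hBT0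
            rw [hBT] at hD2'
            simp [hBT]
            linarith
      -- the candidate primal solution
      set α : Fin m → ℝ := fun i => if b' i * ρ i * ustar < r i * ρ i then 1
          else if b' i * ρ i * ustar = r i * ρ i then θ else 0 with hαdef
      have hα0 : ∀ i, 0 ≤ α i := by
        intro i; rw [hαdef]; dsimp only; split
        · exact zero_le_one
        · split
          · exact hθ0
          · exact le_refl 0
      have hα1 : ∀ i, α i ≤ 1 := by
        intro i; rw [hαdef]; dsimp only; split
        · exact le_refl 1
        · split
          · exact hθ1
          · exact zero_le_one
      have hsplit : ∀ c : Fin m → ℝ, ∑ i, c i * α i = ∑ i ∈ S, c i + θ * ∑ i ∈ T, c i := by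
        intro c
        have hterm : ∀ i, c i * α i =
            (if b' i * ρ i * ustar < r i * ρ i then c i else 0)
            + (if b' i * ρ i * ustar = r i * ρ i then θ * c i else 0) := by
          intro i
          rw [hαdef]; dsimp only
          by_cases h1 : b' i * ρ i * ustar < r i * ρ i
          · rw [if_pos h1, if_pos h1, if_neg (ne_of_lt h1), mul_one, add_zero]
          · rw [if_neg h1, if_neg h1]
            by_cases h2 : b' i * ρ i * ustar = r i * ρ i
            · rw [if_pos h2, if_pos h2, zero_add, mul_comm]
            · rw [if_neg h2, if_neg h2, mul_zero, add_zero]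
        rw [Finset.sum_congr rfl (fun i _ => hterm i), Finset.sum_add_distrib]
        congr 1
        · rw [hSdef, Finset.sum_filter]
        · rw [hTdef, ← Finset.sum_filter, Finset.mul_sum]
      have hfeasα : ∑ i, b' i * ρ i * α i ≤ b := by
        rw [hsplit (fun i => b' i * ρ i)]
        rw [← hBSdef, ← hBTdef, hθkey]
      have hvalα : ∑ i, r i * ρ i * α i = ∑ i, vstar i + ustar * b := by
        rw [hsplit (fun i => r i * ρ i)]
        have h1 : ∑ i ∈ S, r i * ρ i = ∑ i ∈ S, vstar i + ustar * BS := by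
          rw [hBSdef, Finset.mul_sum, ← Finset.sum_add_distrib]
          apply Finset.sum_congr rfl
          intro i hi
          have hPi : b' i * ρ i * ustar < r i * ρ i := (Finset.mem_filter.mp hi).2
          rw [hvchar i, max_eq_left (by linarith)]
          ring
        have h2 : ∑ i ∈ T, r i * ρ i = ustar * BT := by
          rw [hBTdef, Finset.mul_sum]
          apply Finset.sum_congr rfl
          intro i hi
          have hPi : b' i * ρ i * ustar = r i * ρ i := (Finset.mem_filter.mp hi).2
          rw [← hPi]; ring
        rw [h1, h2, hvS]
        have : ustar * BS + θ * (ustar * BT) = ustar * (BS + θ * BT) := by ring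
        rw [add_assoc, this, hθkey]
      have := hpopt α hfeasα hα0 hα1
      rw [hvalα] at this
      linarith
  -- Step 5: weak-duality chain forces complementary slackness
  have h1 : ∑ i, r i * ρ i * αstar i ≤ ∑ i, (vstar i + b' i * ρ i * ustar) * αstar i :=
    Finset.sum_le_sum (fun i _ => mul_le_mul_of_nonneg_right (hdf1 i) (hpf2 i))
  have h2 : ∑ i, (vstar i + b' i * ρ i * ustar) * αstar i
      = ∑ i, vstar i * αstar i + ustar * ∑ i, b' i * ρ i * αstar i := by
    rw [Finset.mul_sum, ← Finset.sum_add_distrib]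
    exact Finset.sum_congr rfl (fun i _ => by ring)
  have h3le : ∀ i ∈ Finset.univ, vstar i * αstar i ≤ vstar i :=
    fun i _ => mul_le_of_le_one_right (hdf2 i) (hpf3 i)
  have h3 : ∑ i, vstar i * αstar i ≤ ∑ i, vstar i := Finset.sum_le_sum h3le
  have h4 : ustar * ∑ i, b' i * ρ i * αstar i ≤ ustar * b :=
    mul_le_mul_of_nonneg_left hpf1 hdf3
  have e3 : ∑ i, vstar i * αstar i = ∑ i, vstar i := by linarith
  have e4 : ustar * ∑ i, b' i * ρ i * αstar i = ustar * b := by linarith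
  have e1 : ∑ i, r i * ρ i * αstar i = ∑ i, (vstar i + b' i * ρ i * ustar) * αstar i := by
    linarith
  have ecs1 : ∀ i, vstar i * αstar i = vstar i :=
    fun i => (Finset.sum_eq_sum_iff_of_le h3le).mp e3 i (Finset.mem_univ i)
  have h1le : ∀ i ∈ Finset.univ,
      r i * ρ i * αstar i ≤ (vstar i + b' i * ρ i * ustar) * αstar i :=
    fun i _ => mul_le_mul_of_nonneg_right (hdf1 i) (hpf2 i)
  have ecs3 : ∀ i, r i * ρ i * αstar i = (vstar i + b' i * ρ i * ustar) * αstar i :=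
    fun i => (Finset.sum_eq_sum_iff_of_le h1le).mp e1 i (Finset.mem_univ i)
  have hv2 : ∀ i, vstar i = r i * ρ i * αstar i - ustar * (b' i * ρ i * αstar i) := by
    intro i
    linear_combination - ecs1 i - ecs3 i
  -- Step 6: the final chain
  intro t ht
  set E : Fin m → ℝ := fun i => Real.exp (-(μ i) * t) with hEdef
  have hM0 : (0:ℝ) < Real.exp (-(⨅ i, μ i) * t) := Real.exp_pos _
  have hEle : ∀ i, E i ≤ Real.exp (-(⨅ i, μ i) * t) := by
    intro i
    apply Real.exp_le_exp.mpr
    apply mul_le_mul_of_nonneg_right _ ht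
    exact neg_le_neg (ciInf_le (Finite.bddBelow_range μ) i)
  have hsv : ∑ i, vstar i * (1 - E i)
      = ∑ i, r i * ρ i * αstar i * (1 - E i)
        - ustar * (∑ i, b' i * ρ i * αstar i - ∑ i, b' i * ρ i * αstar i * E i) := by
    have : ∀ i, vstar i * (1 - E i)
        = r i * ρ i * αstar i * (1 - E i)
          - ustar * (b' i * ρ i * αstar i - b' i * ρ i * αstar i * E i) := by
      intro i
      rw [hv2 i]; ring
    rw [Finset.sum_congr rfl (fun i _ => this i), Finset.sum_sub_distrib, ← Finset.mul_sum,
      Finset.sum_sub_distrib]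
  rw [hsv]
  have hkey : ustar * (b - ∑ i, b' i * ρ i * αstar i + ∑ i, b' i * ρ i * αstar i * E i)
      ≤ ustar * b * Real.exp (-(⨅ i, μ i) * t) := by
    rcases eq_or_lt_of_le hdf3 with hu0 | hupos
    · rw [← hu0]; ring_nf; positivity
    · have hbeq : ∑ i, b' i * ρ i * αstar i = b :=
        mul_left_cancel₀ (ne_of_gt hupos) e4
      have hEsum : ∑ i, b' i * ρ i * αstar i * E i
          ≤ Real.exp (-(⨅ i, μ i) * t) * ∑ i, b' i * ρ i * αstar i := by
        rw [Finset.mul_sum]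
        apply Finset.sum_le_sum
        intro i _
        have hnn : 0 ≤ b' i * ρ i * αstar i := mul_nonneg (hFpos i).le (hpf2 i)
        calc b' i * ρ i * αstar i * E i ≤ b' i * ρ i * αstar i * Real.exp (-(⨅ i, μ i) * t) :=
              mul_le_mul_of_nonneg_left (hEle i) hnn
          _ = Real.exp (-(⨅ i, μ i) * t) * (b' i * ρ i * αstar i) := by ring
      rw [hbeq]
      have : b - b + ∑ i, b' i * ρ i * αstar i * E i = ∑ i, b' i * ρ i * αstar i * E i := by ring
      rw [this]
      calc ustar * ∑ i, b' i * ρ i * αstar i * E i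
          ≤ ustar * (Real.exp (-(⨅ i, μ i) * t) * ∑ i, b' i * ρ i * αstar i) :=
            mul_le_mul_of_nonneg_left hEsum hupos.le
        _ = ustar * b * Real.exp (-(⨅ i, μ i) * t) := by rw [hbeq]; ring
  linarith
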